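/- (Product states on twisted sums of symplectic spaces.) Let H and L be real vector spaces, σ_H and σ_L alternating ℝ-bilinear forms on H and L respectively, and α : H × L → ℝ a bilinear map. Define on V := H × L the alternating form σ_V((h,l),(h′,l′)) := σ_H(h,h′) + σ_L(l,l′) + α(h,l′) − α(h′,l), and set L₀ := {l ∈ L : α(h,l) = 0 for all h ∈ H}. If φ_H : H → ℂ is σ_H-positive-definite and φ_L : L → ℂ is σ_L-positive-definite with φ_L(l) = 0 for every l ∉ L₀, then φ(h,l) := φ_H(h)·φ_L(l) is σ_V-positive-definite. (Hence ω(W(h⊕l)) := ω_H(W(h))·ω_L(W(l)) defines a state on the Weyl algebra of the twisted sum (V, σ_V).) -/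

import Mathlib

open scoped ComplexConjugate

/-- `φ` is a `σ`-positive-definite function on `V`: for every finite family `v`, `a`,
the Weyl-kernel quadratic sum is a nonnegative real number.  Such functions with
`φ(0) = 1` correspond exactly to states on the Weyl algebra `W(V,σ)`. -/
def SigmaPosDef {V : Type*} [AddCommGroup V] [Module ℝ V]
    (σ : V → V → ℝ) (φ : V → ℂ) : Prop :=
  ∀ (n : ℕ) (v : Fin n → V) (a : Fin n → ℂ),
    0 ≤ (∑ i : Fin n, ∑ j : Fin n, conj (a i) * a j *
          Complex.exp (Complex.I / 2 * ((σ (v i) (v j) : ℝ) : ℂ)) *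
          φ (v j - v i)).re ∧
    (∑ i : Fin n, ∑ j : Fin n, conj (a i) * a j *
          Complex.exp (Complex.I / 2 * ((σ (v i) (v j) : ℝ) : ℂ)) *
          φ (v j - v i)).im = 0

open scoped Matrix ComplexOrder

lemma quad_eq {n : Type*} [Fintype n] (M : Matrix n n ℂ) (x : n → ℂ) :
    dotProduct (star x) (M.mulVec x) = ∑ i, ∑ j, conj (x i) * M i j * x j := by
  simp only [dotProduct, Matrix.mulVec, Pi.star_apply, Finset.mul_sum]
  refine Finset.sum_congr rfl fun i _ => Finset.sum_congr rfl fun j _ => ?_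
  simp [mul_comm, mul_assoc, mul_left_comm, RCLike.star_def]

lemma diag_im {n : Type*} [Fintype n] [DecidableEq n] (M : Matrix n n ℂ)
    (h : ∀ x : n → ℂ, (dotProduct (star x) (M.mulVec x)).im = 0) (k : n) :
    (M k k).im = 0 := by
  have hx := h (Pi.single k 1)
  rw [quad_eq] at hx
  simpa [Pi.single_apply, apply_ite conj, ite_mul, mul_ite, Finset.sum_ite_eq,
    Finset.sum_ite_eq'] using hx

lemma quad_two {n : Type*} [Fintype n] [DecidableEq n] (M : Matrix n n ℂ) (i j : n)
    (hij : i ≠ j) (c : ℂ) :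
    dotProduct (star (Pi.single i 1 + c • (Pi.single j 1 : n → ℂ)))
      (M.mulVec (Pi.single i 1 + c • (Pi.single j 1 : n → ℂ))) =
      M i i + c * M i j + conj c * M j i + conj c * c * M j j := by
  have hstar : star (Pi.single i (1:ℂ) + c • (Pi.single j 1 : n → ℂ))
      = Pi.single i 1 + conj c • (Pi.single j 1 : n → ℂ) := by
    funext k
    by_cases hk : k = i <;> by_cases hk' : k = j <;>
      simp_all [Pi.single_apply, RCLike.star_def]
  rw [hstar, Matrix.mulVec_add, Matrix.mulVec_smul, Matrix.mulVec_single_one,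
    add_dotProduct, smul_dotProduct, dotProduct_add,
    dotProduct_add, dotProduct_smul, dotProduct_smul,
    single_dotProduct, single_dotProduct]
  simp only [smul_eq_mul, single_dotProduct, one_mul, Matrix.transpose_apply,
    Matrix.mulVec_single_one, Matrix.col_apply]
  ring

lemma isHermitian_of_im_quad_zero {n : Type*} [Fintype n] [DecidableEq n] (M : Matrix n n ℂ)
    (h : ∀ x : n → ℂ, (dotProduct (star x) (M.mulVec x)).im = 0) :
    M.IsHermitian := by
  have hd := diag_im M h
  ext i j
  show conj (M j i) = M i j
  by_cases hij : i = j
  · subst hij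
    rw [Complex.conj_eq_iff_im]
    exact hd i
  · have h1 := h (Pi.single i 1 + (1:ℂ) • (Pi.single j 1 : n → ℂ))
    rw [quad_two M i j hij 1] at h1
    have h2 := h (Pi.single i 1 + Complex.I • (Pi.single j 1 : n → ℂ))
    rw [quad_two M i j hij Complex.I] at h2
    simp only [Complex.add_im, Complex.mul_im, Complex.one_re, Complex.one_im,
      map_one, Complex.conj_I, Complex.mul_re, Complex.I_re, Complex.I_im,
      Complex.neg_im, Complex.neg_re] at h1 h2
    apply Complex.ext <;> simp only [Complex.conj_re, Complex.conj_im] <;>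
      [skip; skip] <;> nlinarith [hd i, hd j, h1, h2]

lemma schur_posSemidef {n : Type*} [Fintype n] [DecidableEq n]
    {A B : Matrix n n ℂ} (hA : A.PosSemidef) (hB : B.PosSemidef) :
    (A ⊙ B).PosSemidef := by
  open scoped MatrixOrder Matrix.Norms.L2Operator in
  obtain ⟨C, hC⟩ := CStarAlgebra.nonneg_iff_eq_star_mul_self.mp hA.nonneg
  rw [Matrix.star_eq_conjTranspose] at hC
  subst hC
  refine Matrix.PosSemidef.of_dotProduct_mulVec_nonneg ?_ ?_
  · ext i j
    show conj ((Cᴴ * C) j i * B j i) = (Cᴴ * C) i j * B i j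
    have h1 : conj ((Cᴴ * C) j i) = (Cᴴ * C) i j := congrFun (congrFun (Matrix.posSemidef_conjTranspose_mul_self C).1 i) j
    have h2 : conj (B j i) = B i j := congrFun (congrFun hB.1 i) j
    rw [map_mul, h1, h2]
  · intro x
    rw [quad_eq]
    have key : ∑ i, ∑ j, conj (x i) * ((Cᴴ * C) ⊙ B) i j * x j
        = ∑ k, ∑ i, ∑ j, conj (C k i * x i) * B i j * (C k j * x j) := by
      calc ∑ i, ∑ j, conj (x i) * ((Cᴴ * C) ⊙ B) i j * x j
          = ∑ i, ∑ k, ∑ j, conj (C k i * x i) * B i j * (C k j * x j) := by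
            refine Finset.sum_congr rfl fun i _ => ?_
            rw [Finset.sum_comm]
            refine Finset.sum_congr rfl fun j _ => ?_
            simp only [Matrix.hadamard_apply, Matrix.mul_apply, Matrix.conjTranspose_apply,
              Finset.sum_mul, Finset.mul_sum, map_mul, RCLike.star_def]
            refine Finset.sum_congr rfl fun k _ => ?_
            ring
        _ = ∑ k, ∑ i, ∑ j, conj (C k i * x i) * B i j * (C k j * x j) := Finset.sum_comm
    rw [key]
    refine Finset.sum_nonneg fun k _ => ?_
    have := hB.dotProduct_mulVec_nonneg (fun i => C k i * x i)
    rwa [quad_eq] at this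

lemma kernel_posSemidef {V : Type*} [AddCommGroup V] [Module ℝ V]
    {σ : V → V → ℝ} {φ : V → ℂ} (hφ : SigmaPosDef σ φ) (n : ℕ) (v : Fin n → V) :
    (Matrix.of fun i j => Complex.exp (Complex.I / 2 * ((σ (v i) (v j) : ℝ) : ℂ)) *
      φ (v j - v i)).PosSemidef := by
  have hquad : ∀ x : Fin n → ℂ,
      dotProduct (star x) ((Matrix.of fun i j =>
        Complex.exp (Complex.I / 2 * ((σ (v i) (v j) : ℝ) : ℂ)) * φ (v j - v i)).mulVec x)
      = ∑ i, ∑ j, conj (x i) * x j *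
          Complex.exp (Complex.I / 2 * ((σ (v i) (v j) : ℝ) : ℂ)) * φ (v j - v i) := by
    intro x
    rw [quad_eq]
    refine Finset.sum_congr rfl fun i _ => Finset.sum_congr rfl fun j _ => ?_
    simp only [Matrix.of_apply]
    ring
  refine Matrix.PosSemidef.of_dotProduct_mulVec_nonneg ?_ ?_
  · exact isHermitian_of_im_quad_zero _ fun x => by rw [hquad x]; exact (hφ n v x).2
  · intro x
    rw [hquad x, Complex.le_def]
    exact ⟨by simpa using (hφ n v x).1, ((hφ n v x).2).symm ▸ rfl⟩

lemma indicator_posSemidef {n : Type*} [Fintype n] [DecidableEq n] {K : Type*} [DecidableEq K]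
    (f : n → K) : (Matrix.of fun i j => if f i = f j then (1:ℂ) else 0).PosSemidef := by
  classical
  set s := Finset.image f Finset.univ with hs
  set A : Matrix ↥s n ℂ := Matrix.of fun c i => if f i = ↑c then 1 else 0 with hA
  have hD : (Matrix.of fun i j => if f i = f j then (1:ℂ) else 0) = Aᴴ * A := by
    ext i j
    simp only [Matrix.mul_apply, Matrix.conjTranspose_apply, Matrix.of_apply, hA]
    by_cases hij : f i = f j
    · rw [if_pos hij, hij]
      rw [Finset.sum_eq_single (⟨f j, Finset.mem_image_of_mem f (Finset.mem_univ j)⟩ : ↥s)]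
      · simp
      · intro c _ hc
        have : f j ≠ ↑c := fun h => hc (Subtype.ext h.symm)
        simp [this]
      · intro h; exact absurd (Finset.mem_univ _) h
    · rw [if_neg hij]; symm; apply Finset.sum_eq_zero; intro c _
      by_cases h1 : f i = ↑c
      · have h2 : f j ≠ ↑c := fun h => hij (h1.trans h.symm)
        simp [h2]
      · simp [h1]
  rw [hD]
  exact Matrix.posSemidef_conjTranspose_mul_self A

/-- (Product states on twisted sums of symplectic spaces.)  Let
`σ_H`, `σ_L` be alternating bilinear forms on `H`, `L`, and `α : H × L → ℝ` bilinear.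
On `V = H × L` define
`σ_V((h,l),(h′,l′)) = σ_H(h,h′) + σ_L(l,l′) + α(h,l′) − α(h′,l)` and let
`L₀ = {l : α(·,l) ≡ 0}`.  If `φ_H` is `σ_H`-positive-definite and `φ_L` is
`σ_L`-positive-definite vanishing off `L₀`, then `φ(h,l) = φ_H(h)·φ_L(l)` is
`σ_V`-positive-definite. -/
theorem stmt_17 {H L : Type*} [AddCommGroup H] [Module ℝ H] [AddCommGroup L] [Module ℝ L]
    (σH : H →ₗ[ℝ] H →ₗ[ℝ] ℝ) (σL : L →ₗ[ℝ] L →ₗ[ℝ] ℝ) (α : H →ₗ[ℝ] L →ₗ[ℝ] ℝ)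
    (hσH : ∀ h, σH h h = 0) (hσL : ∀ l, σL l l = 0)
    (φH : H → ℂ) (φL : L → ℂ)
    (hφH : SigmaPosDef (fun x y => σH x y) φH)
    (hφL : SigmaPosDef (fun x y => σL x y) φL)
    (hvanish : ∀ l : L, ¬ (∀ h : H, α h l = 0) → φL l = 0) :
    SigmaPosDef
      (fun v w : H × L => σH v.1 w.1 + σL v.2 w.2 + α v.1 w.2 - α w.1 v.2)
      (fun v : H × L => φH v.1 * φL v.2) := by
  classical
  intro n v a
  set f : Fin n → (H →ₗ[ℝ] ℝ) := fun i => α.flip (v i).2 with hf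
  set β : Fin n → ℝ := fun i => α (v i).1 (v i).2 with hβ
  set b : Fin n → ℂ := fun i => a i * Complex.exp (-(Complex.I/2) * (β i : ℝ)) with hb
  set KH : Matrix (Fin n) (Fin n) ℂ := Matrix.of fun i j =>
    Complex.exp (Complex.I / 2 * ((σH (v i).1 (v j).1 : ℝ) : ℂ)) * φH ((v j).1 - (v i).1) with hKH
  set KL : Matrix (Fin n) (Fin n) ℂ := Matrix.of fun i j =>
    Complex.exp (Complex.I / 2 * ((σL (v i).2 (v j).2 : ℝ) : ℂ)) * φL ((v j).2 - (v i).2) with hKL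
  set D : Matrix (Fin n) (Fin n) ℂ := Matrix.of fun i j =>
    if f i = f j then (1:ℂ) else 0 with hD
  have hN : (D ⊙ (KH ⊙ KL)).PosSemidef :=
    schur_posSemidef (indicator_posSemidef f)
      (schur_posSemidef (kernel_posSemidef hφH n (fun i => (v i).1))
        (kernel_posSemidef hφL n (fun i => (v i).2)))
  have hmain : (∑ i : Fin n, ∑ j : Fin n, conj (a i) * a j *
        Complex.exp (Complex.I / 2 *
          ((σH (v i).1 (v j).1 + σL (v i).2 (v j).2
            + α (v i).1 (v j).2 - α (v j).1 (v i).2 : ℝ) : ℂ)) *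
        (φH ((v j - v i).1) * φL ((v j - v i).2)))
      = dotProduct (star b) ((D ⊙ (KH ⊙ KL)).mulVec b) := by
    rw [quad_eq]
    refine Finset.sum_congr rfl fun i _ => Finset.sum_congr rfl fun j _ => ?_
    by_cases hij : f i = f j
    · have e1 : α (v i).1 (v j).2 = α (v i).1 (v i).2 := by
        have := LinearMap.congr_fun hij (v i).1
        simpa [hf, LinearMap.flip_apply] using this.symm
      have e2 : α (v j).1 (v i).2 = α (v j).1 (v j).2 := by
        have := LinearMap.congr_fun hij (v j).1
        simpa [hf, LinearMap.flip_apply] using this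
      have hcb : conj (Complex.exp (-(Complex.I/2) * ((β i : ℝ) : ℂ)))
          = Complex.exp ((Complex.I/2) * ((β i : ℝ) : ℂ)) := by
        rw [← Complex.exp_conj]
        congr 1
        simp only [map_mul, map_neg, map_div₀, Complex.conj_I, Complex.conj_ofReal, map_ofNat]
        ring
      have hexp : Complex.exp (Complex.I / 2 *
            ((σH (v i).1 (v j).1 + σL (v i).2 (v j).2
              + α (v i).1 (v j).2 - α (v j).1 (v i).2 : ℝ) : ℂ))
          = Complex.exp ((Complex.I/2) * ((β i : ℝ) : ℂ))
            * Complex.exp (Complex.I / 2 * ((σH (v i).1 (v j).1 : ℝ) : ℂ))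
            * Complex.exp (Complex.I / 2 * ((σL (v i).2 (v j).2 : ℝ) : ℂ))
            * Complex.exp (-(Complex.I/2) * ((β j : ℝ) : ℂ)) := by
        rw [← Complex.exp_add, ← Complex.exp_add, ← Complex.exp_add]
        congr 1
        rw [e1, e2]
        simp only [hβ]
        push_cast
        ring
      simp only [Matrix.hadamard_apply, Matrix.of_apply, hD, hKH, hKL, if_pos hij, hb,
        Prod.fst_sub, Prod.snd_sub, map_mul, hcb, hexp]
      ring
    · have hφ0 : φL ((v j).2 - (v i).2) = 0 := by
        apply hvanish
        intro hall
        apply hij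
        apply LinearMap.ext
        intro h
        have := hall h
        rw [map_sub] at this
        simp only [hf, LinearMap.flip_apply]
        linarith
      simp [Matrix.hadamard_apply, hD, hKL, if_neg hij, hφ0, Prod.snd_sub]
  have hpos := hN.dotProduct_mulVec_nonneg b
  rw [← hmain, Complex.le_def] at hpos
  exact ⟨by simpa using hpos.1, by simpa using hpos.2.symm⟩
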